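/- Let ν be a Young measure on ℝ parametrized by (0,T)×Ω with finite 2-moments, and let a ∈ L²((0,T)×Ω) be such that ∫_ℝ z dν_{(t,x)}(z) = a(t,x) for a.e. (t,x) ∈ (0,T)×Ω, and such that ∫₀^T ∫_Ω ( ∫_ℝ z² dν_{(t,x)}(z) ) dx dt = ∫₀^T ∫_Ω a(t,x)² dx dt. Then for a.e. (t,x) ∈ (0,T)×Ω, ν_{(t,x)} = δ_{a(t,x)}, the Dirac measure at a(t,x). -/

import Mathlib

open MeasureTheory Set

/-- A probability measure giving zero mass to `{a}ᶜ` is the Dirac measure at `a`. -/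
lemma eq_dirac_of_compl_singleton_null (μ : Measure ℝ) [IsProbabilityMeasure μ]
    (a : ℝ) (h : μ {a}ᶜ = 0) : μ = Measure.dirac a := by
  ext s hs
  rw [Measure.dirac_apply' _ hs]
  by_cases has : a ∈ s
  · have hcompl : μ sᶜ = 0 := measure_mono_null (fun z hz => by
      simp only [mem_compl_iff, mem_singleton_iff]
      rintro rfl; exact hz has) h
    have h1 : μ s = 1 := by
      have := measure_add_measure_compl (μ := μ) hs
      rw [hcompl, add_zero] at this
      simpa using this
    simp [h1, has]
  · have : μ s = 0 := measure_mono_null (fun z hz => by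
      simp only [mem_compl_iff, mem_singleton_iff]
      rintro rfl; exact has hz) h
    simp [this, has]

/-- Let `ν` be a Young measure on `ℝ` parametrized by `(0,T) × Ω` with
finite 2-moments, and `a ∈ L²((0,T) × Ω)` with `∫ z dν_{(t,x)} = a(t,x)` a.e. and
`∫∫ (∫ z² dν_{(t,x)}) dx dt = ∫∫ a(t,x)² dx dt`.  Then for a.e. `(t,x)`,
`ν_{(t,x)} = δ_{a(t,x)}`. -/
theorem dirac_from_first_and_second_moment_equality
    {n : ℕ} (T : ℝ) (hT : 0 < T)
    (Ω : Set (Fin n → ℝ)) (hΩopen : IsOpen Ω) (hΩbdd : Bornology.IsBounded Ω)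
    (ν : ℝ × (Fin n → ℝ) → Measure ℝ)
    (hprob : ∀ q, IsProbabilityMeasure (ν q))
    (hkernel : ∀ A : Set ℝ, MeasurableSet A → Measurable fun q => ν q A)
    (hmom : ∫⁻ q in Ioo (0 : ℝ) T ×ˢ Ω, ∫⁻ z, ENNReal.ofReal (‖z‖ ^ 2) ∂(ν q) < ⊤)
    (a : ℝ × (Fin n → ℝ) → ℝ)
    (ha : MemLp a 2 (volume.restrict (Ioo (0 : ℝ) T ×ˢ Ω)))
    (hmean : ∀ᵐ q ∂(volume.restrict (Ioo (0 : ℝ) T ×ˢ Ω)), ∫ z, z ∂(ν q) = a q)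
    (heq : ∫ q in Ioo (0 : ℝ) T ×ˢ Ω, (∫ z, z ^ 2 ∂(ν q))
      = ∫ q in Ioo (0 : ℝ) T ×ˢ Ω, (a q) ^ 2) :
    ∀ᵐ q ∂(volume.restrict (Ioo (0 : ℝ) T ×ˢ Ω)),
      ν q = Measure.dirac (a q) := by
  set μ := volume.restrict (Ioo (0 : ℝ) T ×ˢ Ω) with hμ
  -- measurability of the kernel and of the second moment
  have hνm : Measurable ν := Measure.measurable_of_measurable_coe ν hkernel
  have hg : Measurable fun z : ℝ => ENNReal.ofReal (‖z‖ ^ 2) :=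
    ((measurable_norm.pow_const 2)).ennreal_ofReal
  have hFmeas : Measurable fun q => ∫⁻ z, ENNReal.ofReal (‖z‖ ^ 2) ∂(ν q) :=
    (Measure.measurable_lintegral hg).comp hνm
  -- a.e. finiteness of the second moment
  have hfin : ∀ᵐ q ∂μ, (∫⁻ z, ENNReal.ofReal (‖z‖ ^ 2) ∂(ν q)) < ⊤ :=
    ae_lt_top hFmeas hmom.ne
  -- for q with finite second moment, z² and z are integrable w.r.t. ν q
  have hint2 : ∀ q, (∫⁻ z, ENNReal.ofReal (‖z‖ ^ 2) ∂(ν q)) < ⊤ →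
      Integrable (fun z : ℝ => z ^ 2) (ν q) := by
    intro q hq
    refine ⟨(measurable_id.pow_const 2).aestronglyMeasurable, ?_⟩
    rw [hasFiniteIntegral_iff_ofReal (Filter.Eventually.of_forall fun z => sq_nonneg z)]
    simpa [Real.norm_eq_abs, sq_abs] using hq
  have hint1 : ∀ q, (∫⁻ z, ENNReal.ofReal (‖z‖ ^ 2) ∂(ν q)) < ⊤ →
      Integrable (fun z : ℝ => z) (ν q) := by
    intro q hq
    haveI := hprob q
    refine Integrable.mono' ((hint2 q hq).add (integrable_const 1)) measurable_id.aestronglyMeasurable ?_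
    refine Filter.Eventually.of_forall fun z => ?_
    simp only [Real.norm_eq_abs, Pi.add_apply]
    nlinarith [sq_nonneg (|z| - 1), abs_nonneg z, sq_abs z]
  -- pointwise identity: ∫ (z - a q)² = ∫ z² - (a q)²  when ∫ z = a q
  have hptwise : ∀ q, (∫⁻ z, ENNReal.ofReal (‖z‖ ^ 2) ∂(ν q)) < ⊤ →
      (∫ z, z ∂(ν q)) = a q →
      (∫ z, (z - a q) ^ 2 ∂(ν q)) = (∫ z, z ^ 2 ∂(ν q)) - (a q) ^ 2 := by
    intro q hq hm
    haveI := hprob q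
    have h2 := hint2 q hq
    have h1 := hint1 q hq
    have hexp : (fun z : ℝ => (z - a q) ^ 2)
        = fun z : ℝ => z ^ 2 - (2 * a q) * z + (a q) ^ 2 := by
      funext z; ring
    have hmul : Integrable (fun z : ℝ => 2 * a q * z) (ν q) := h1.const_mul _
    have hsub : Integrable (fun z : ℝ => z ^ 2 - 2 * a q * z) (ν q) := h2.sub hmul
    rw [hexp, integral_add hsub (integrable_const _),
      integral_sub h2 hmul, integral_const_mul, hm, integral_const]
    simp; ring
  -- the function F' q = ∫ z² dν q is integrable over μ
  have hF'eq : ∀ q, (∫ z, z ^ 2 ∂(ν q))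
      = (∫⁻ z, ENNReal.ofReal (‖z‖ ^ 2) ∂(ν q)).toReal := by
    intro q
    rw [integral_eq_lintegral_of_nonneg_ae (Filter.Eventually.of_forall fun z => sq_nonneg z)
      (measurable_id.pow_const 2).aestronglyMeasurable]
    congr 1
    refine lintegral_congr fun z => ?_
    simp [Real.norm_eq_abs, sq_abs]
  have hF'int : Integrable (fun q => ∫ z, z ^ 2 ∂(ν q)) μ := by
    have := integrable_toReal_of_lintegral_ne_top (hFmeas.aemeasurable (μ := μ)) hmom.ne
    simpa only [← hF'eq] using this
  have ha2int : Integrable (fun q => (a q) ^ 2) μ := ha.integrable_sq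
  -- the difference h is nonneg a.e. and has zero integral
  set h : ℝ × (Fin n → ℝ) → ℝ := fun q => (∫ z, z ^ 2 ∂(ν q)) - (a q) ^ 2 with hh
  have hhint : Integrable h μ := hF'int.sub ha2int
  have hhnonneg : 0 ≤ᵐ[μ] h := by
    filter_upwards [hfin, hmean] with q hq hm
    have := hptwise q hq hm
    have hnn : 0 ≤ ∫ z, (z - a q) ^ 2 ∂(ν q) :=
      integral_nonneg fun z => sq_nonneg _
    simp only [hh, Pi.zero_apply]
    linarith [this ▸ hnn]
  have hhzero : ∫ q, h q ∂μ = 0 := by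
    rw [hh]
    rw [integral_sub hF'int ha2int]
    rw [hμ] at heq ⊢
    rw [heq]; ring
  have hae0 : h =ᵐ[μ] 0 := (integral_eq_zero_iff_of_nonneg_ae hhnonneg hhint).mp hhzero
  -- conclude: a.e. q, ν q = dirac (a q)
  filter_upwards [hfin, hmean, hae0] with q hq hm h0
  haveI := hprob q
  have hvar : ∫ z, (z - a q) ^ 2 ∂(ν q) = 0 := by
    rw [hptwise q hq hm]
    simpa [hh] using h0
  have hintvar : Integrable (fun z : ℝ => (z - a q) ^ 2) (ν q) := by
    have hexp : (fun z : ℝ => (z - a q) ^ 2)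
        = fun z : ℝ => z ^ 2 - (2 * a q) * z + (a q) ^ 2 := by
      funext z; ring
    rw [hexp]
    exact ((hint2 q hq).sub ((hint1 q hq).const_mul _)).add (integrable_const _)
  have hzero : (fun z : ℝ => (z - a q) ^ 2) =ᵐ[ν q] 0 :=
    (integral_eq_zero_iff_of_nonneg_ae
      (Filter.Eventually.of_forall fun z => sq_nonneg _) hintvar).mp hvar
  have hnull : ν q {a q}ᶜ = 0 := by
    have : {z : ℝ | ¬ (z - a q) ^ 2 = 0} = {a q}ᶜ := by
      ext z
      simp [sub_eq_zero, pow_eq_zero_iff]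
    rw [← this]
    simpa [Filter.EventuallyEq, ae_iff] using hzero
  exact eq_dirac_of_compl_singleton_null (ν q) (a q) hnull
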